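/- Let D be a separable Banach space (in particular a separable C*-algebra) and I any index set. For every x in ℓ∞(I; D) and every ε > 0, there exists a countable subset J ⊆ I and a map f : ℓ∞(J; D) → ℓ∞(I; D) of norm at most 1 such that ‖f(p_J(x)) − x‖ ≤ ε, where p_J denotes restriction to J. More precisely, one can cover D by countably many disjoint Borel sets B_n of diameter < ε, pick a point i_n in each nonempty preimage x⁻¹(B_n), take J = {i_n}, and define f(y) = Σ_n 1_{x⁻¹(B_n)} · y(i_n). -/
import Mathlib


/-- Let `D` be a separable Banach space and `I` any index set.  For every
bounded `x : I → D` (an element of `ℓ∞(I; D)`) and every `ε > 0`, there is a countable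
subset `J ⊆ I` and a linear map `f : ℓ∞(J; D) → ℓ∞(I; D)` of norm at most `1`
(expressed pointwise: it maps functions bounded by `C` to functions bounded by `C`)
such that `‖f (p_J x) − x‖_∞ ≤ ε`, where `p_J` is the restriction map to `J`. -/
theorem stmt_0 {D : Type*} [NormedAddCommGroup D] [NormedSpace ℝ D]
    [TopologicalSpace.SeparableSpace D]
    {I : Type*} (x : I → D) (hx : ∃ C : ℝ, ∀ i, ‖x i‖ ≤ C)
    {ε : ℝ} (hε : 0 < ε) :
    ∃ J : Set I, J.Countable ∧
      ∃ f : (J → D) →ₗ[ℝ] (I → D),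
        (∀ (y : J → D) (C : ℝ), 0 ≤ C → (∀ j, ‖y j‖ ≤ C) → ∀ i, ‖f y i‖ ≤ C) ∧
        (∀ i, ‖f (fun j : J => x j) i - x i‖ ≤ ε) := by
  classical
  have hsep : TopologicalSpace.IsSeparable (Set.range x) :=
    TopologicalSpace.IsSeparable.of_separableSpace _
  obtain ⟨T, hTsub, hTc, hTd⟩ := hsep.exists_countable_dense_subset
  -- choose a preimage for each element of T
  have hpre : ∀ t : T, ∃ i : I, x i = (t : D) := fun t => hTsub t.2
  choose g hg using hpre
  haveI : Countable T := hTc.to_subtype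
  refine ⟨Set.range g, Set.countable_range g, ?_⟩
  -- each i has a nearby point of the form x (g t)
  have hnear : ∀ i : I, ∃ j : Set.range g, ‖x i - x (j : I)‖ ≤ ε := by
    intro i
    have hxi : x i ∈ closure T := hTd ⟨i, rfl⟩
    rcases Metric.mem_closure_iff.1 hxi ε hε with ⟨t, htT, hdist⟩
    refine ⟨⟨g ⟨t, htT⟩, ⟨⟨t, htT⟩, rfl⟩⟩, ?_⟩
    rw [hg ⟨t, htT⟩]
    exact le_of_lt (by simpa [dist_eq_norm] using hdist)
  choose r hr using hnear
  refine ⟨{ toFun := fun y i => y (r i),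
            map_add' := fun y z => rfl,
            map_smul' := fun c y => rfl }, ?_, ?_⟩
  · intro y C _ hy i
    exact hy (r i)
  · intro i
    simpa [norm_sub_rev] using hr i
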